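/- Let V₁, V₂ : H_M → H_s ⊗ H_M be isometries between finite-dimensional Hilbert spaces such that the channels X ↦ tr_s(Vᵢ X Vᵢ†) each have a full-rank positive definite fixed point σᵢ and no other eigenvectors with eigenvalue of modulus 1. Then every eigenvalue ν of the linear map X ↦ tr_s(V₁ X V₂†) satisfies |ν| ≤ 1. -/

import Mathlib

open Matrix
open scoped ComplexOrder

/-- Partial trace over the spin (first) tensor factor. -/
noncomputable def ptraceS {s m : Type*} [Fintype s]
    (M : Matrix (s × m) (s × m) ℂ) : Matrix m m ℂ :=
  fun a b => ∑ k : s, M (k, a) (k, b)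

namespace CrossTransferAux

set_option linter.unusedSectionVars false
set_option linter.unusedVariables false

variable {n : Type*} [Fintype n] [DecidableEq n]

lemma smul_posSemidef {M : Matrix n n ℂ} (hM : M.PosSemidef) {c : ℝ} (hc : 0 ≤ c) :
    ((c : ℂ) • M).PosSemidef := by
  refine PosSemidef.of_dotProduct_mulVec_nonneg ?_ fun x => ?_
  · have := hM.1
    unfold Matrix.IsHermitian at *
    rw [conjTranspose_smul, this, Complex.star_def, Complex.conj_ofReal]
  · rw [smul_mulVec, dotProduct_smul, smul_eq_mul]
    exact mul_nonneg (Complex.zero_le_real.mpr hc) (hM.dotProduct_mulVec_nonneg x)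

lemma exists_smul_one_sub_posSemidef {A : Matrix n n ℂ} (hA : A.IsHermitian) :
    ∃ c : ℝ, 0 ≤ c ∧ ((c : ℂ) • 1 - A).PosSemidef := by
  set c : ℝ := ∑ i, |hA.eigenvalues i| with hc
  refine ⟨c, Finset.sum_nonneg fun _ _ => abs_nonneg _, ?_⟩
  set U : Matrix n n ℂ := (hA.eigenvectorUnitary : Matrix n n ℂ) with hU
  have hUU : U * star U = 1 := (Matrix.mem_unitaryGroup_iff).mp hA.eigenvectorUnitary.2
  have key : (c : ℂ) • (1 : Matrix n n ℂ) - A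
      = U * diagonal (fun i => ((c - hA.eigenvalues i : ℝ) : ℂ)) * Uᴴ := by
    have h1 : (c : ℂ) • (1 : Matrix n n ℂ) = U * ((c : ℂ) • 1) * star U := by
      rw [Matrix.mul_smul, Matrix.smul_mul, mul_one, hUU]
    conv_lhs => rw [h1, hA.spectral_theorem, Unitary.conjStarAlgAut_apply]
    rw [← hU, Matrix.star_eq_conjTranspose, ← Matrix.sub_mul, ← Matrix.mul_sub]
    congr 2
    ext i j
    by_cases h : i = j <;>
      simp [h, diagonal_apply, one_apply, Complex.ofReal_sub, sub_eq_iff_eq_add]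
  rw [key]
  refine PosSemidef.mul_mul_conjTranspose_same ?_ U
  rw [posSemidef_diagonal_iff]
  intro i
  rw [Complex.zero_le_real, sub_nonneg]
  exact le_trans (le_abs_self _)
    (hc ▸ Finset.single_le_sum (fun i _ => abs_nonneg (hA.eigenvalues i)) (Finset.mem_univ i))

lemma exists_pos_smul_one_le {Q : Matrix n n ℂ} (hQ : Q.PosDef) :
    ∃ ε : ℝ, 0 < ε ∧ (Q - (ε : ℂ) • 1).PosSemidef := by
  cases isEmpty_or_nonempty n with
  | inl h =>
      exact ⟨1, one_pos, .of_dotProduct_mulVec_nonneg (by ext i j; exact h.elim i) fun x => by simp [dotProduct]⟩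
  | inr h =>
      set hH := hQ.1
      set ε : ℝ := Finset.univ.inf' (Finset.univ_nonempty) hH.eigenvalues with hε
      have hεpos : 0 < ε := by
        rw [hε, Finset.lt_inf'_iff]
        exact fun i _ => hQ.eigenvalues_pos i
      refine ⟨ε, hεpos, ?_⟩
      set U : Matrix n n ℂ := (hH.eigenvectorUnitary : Matrix n n ℂ) with hU
      have hUU : U * star U = 1 := (Matrix.mem_unitaryGroup_iff).mp hH.eigenvectorUnitary.2
      have key : Q - (ε : ℂ) • (1 : Matrix n n ℂ)
          = U * diagonal (fun i => ((hH.eigenvalues i - ε : ℝ) : ℂ)) * Uᴴ := by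
        have h1 : (ε : ℂ) • (1 : Matrix n n ℂ) = U * ((ε : ℂ) • 1) * star U := by
          rw [Matrix.mul_smul, Matrix.smul_mul, mul_one, hUU]
        conv_lhs => rw [h1, hH.spectral_theorem, Unitary.conjStarAlgAut_apply]
        rw [← hU, Matrix.star_eq_conjTranspose, ← Matrix.sub_mul, ← Matrix.mul_sub]
        congr 2
        ext i j
        by_cases h : i = j <;>
          simp [h, diagonal_apply, one_apply, Complex.ofReal_sub, sub_eq_iff_eq_add]
      rw [key]
      refine PosSemidef.mul_mul_conjTranspose_same ?_ U
      rw [posSemidef_diagonal_iff]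
      intro i
      rw [Complex.zero_le_real, sub_nonneg, hε]
      exact Finset.inf'_le _ (Finset.mem_univ i)

lemma exists_smul_posDef_sub {Q K : Matrix n n ℂ} (hQ : Q.PosDef) (hK : K.PosSemidef) :
    ∃ t : ℝ, 0 < t ∧ ((t : ℂ) • Q - K).PosSemidef := by
  obtain ⟨c, hc0, hc⟩ := exists_smul_one_sub_posSemidef hK.isHermitian
  obtain ⟨ε, hε0, hε⟩ := exists_pos_smul_one_le hQ
  refine ⟨(c + 1) / ε, by positivity, ?_⟩
  have htε : (((c + 1) / ε : ℝ) : ℂ) * ((ε : ℝ) : ℂ) = (c : ℂ) + 1 := by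
    push_cast
    field_simp
  have key : ((((c + 1) / ε : ℝ) : ℂ)) • Q - K
      = ((((c + 1) / ε : ℝ) : ℂ)) • (Q - (ε : ℂ) • 1) + (1 : Matrix n n ℂ) + ((c : ℂ) • 1 - K) := by
    rw [smul_sub, smul_smul, htε]
    module
  rw [key]
  exact ((smul_posSemidef hε (by positivity)).add Matrix.PosSemidef.one).add hc

lemma psd_diag_re_nonneg {M : Matrix n n ℂ} (hM : M.PosSemidef) (i : n) :
    0 ≤ (M i i).re := by
  have h := hM.dotProduct_mulVec_nonneg (Pi.single i 1)
  have he : star (Pi.single i (1:ℂ)) ⬝ᵥ (M *ᵥ Pi.single i 1) = M i i := by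
    rw [Matrix.mulVec_single, ← Pi.single_star, star_one, single_dotProduct]
    simp
  rw [he] at h
  exact ((Complex.le_def.mp h).1 : _)

lemma psd_entry_bound {M : Matrix n n ℂ} (hM : M.PosSemidef) (i j : n) :
    2 * ‖M i j‖ ≤ (M i i).re + (M j j).re := by
  rcases eq_or_ne (M i j) 0 with h | h
  · rw [h]
    simpa using add_nonneg (psd_diag_re_nonneg hM i) (psd_diag_re_nonneg hM j)
  · set r : ℝ := ‖M i j‖ with hr
    have hrpos : 0 < r := by
      rw [hr]; exact (norm_pos_iff.mpr h)
    set x : n → ℂ := Pi.single i (-(M i j)) + Pi.single j ((r : ℂ)) with hx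
    have h0 := hM.dotProduct_mulVec_nonneg x
    have hji : M j i = (starRingEnd ℂ) (M i j) := by
      conv_rhs => rw [← hM.1.apply i j]
      simp
    have hconj : (starRingEnd ℂ) (M i j) * M i j = ((r : ℂ))^2 := by
      rw [mul_comm, Complex.mul_conj]
      rw [Complex.normSq_eq_norm_sq]
      push_cast
      rw [hr]
    have hform : star x ⬝ᵥ (M *ᵥ x)
        = ((r:ℂ))^2 * (M i i) + (r:ℂ)^2 * (M j j) - 2 * (r:ℂ)^3 := by
      rw [hx, star_add, ← Pi.single_star, ← Pi.single_star, mulVec_add, Matrix.mulVec_single,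
        Matrix.mulVec_single, dotProduct_add, add_dotProduct, add_dotProduct,
        single_dotProduct, single_dotProduct, single_dotProduct,
        single_dotProduct]
      simp only [Pi.add_apply, star_neg, Complex.star_def, Complex.conj_ofReal, Pi.smul_apply,
        op_smul_eq_mul, Matrix.col_apply, hji]
      linear_combination (M i i - 2*(r:ℂ) : ℂ) * hconj
    rw [hform] at h0
    have h0re := (Complex.le_def.mp h0).1
    have hexp : (((r:ℂ))^2 * (M i i) + (r:ℂ)^2 * (M j j) - 2 * (r:ℂ)^3).re
        = r^2 * (M i i).re + r^2 * (M j j).re - 2 * r^3 := by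
      rw [show (2 * (r:ℂ)^3) = ((2 * r^3 : ℝ) : ℂ) by push_cast; ring,
        show ((r:ℂ))^2 = ((r^2 : ℝ) : ℂ) by push_cast; ring]
      rw [Complex.sub_re, Complex.add_re, Complex.re_ofReal_mul,
        Complex.re_ofReal_mul, Complex.ofReal_re]
    rw [hexp] at h0re
    simp only [Complex.zero_re] at h0re
    nlinarith [mul_pos hrpos hrpos]

variable {s m : Type*} [Fintype s] [Fintype m] [DecidableEq m]

/-- The `k`-th Kraus slice of an operator `H_M → H_s ⊗ H_M`. -/
def slice (V : Matrix (s × m) m ℂ) (k : s) : Matrix m m ℂ :=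
  Matrix.of fun a c => V (k, a) c

lemma ptraceS_eq (V W : Matrix (s × m) m ℂ) (X : Matrix m m ℂ) :
    ptraceS (V * X * Wᴴ) = ∑ k : s, slice V k * X * (slice W k)ᴴ := by
  ext a b
  rw [Matrix.sum_apply]
  unfold ptraceS
  refine Finset.sum_congr rfl fun k _ => ?_
  simp [Matrix.mul_apply, slice, conjTranspose_apply]

lemma sum_fromBlocks {ι : Type*} (t : Finset ι) (f g h l : ι → Matrix m m ℂ) :
    ∑ k ∈ t, fromBlocks (f k) (g k) (h k) (l k)
      = fromBlocks (∑ k ∈ t, f k) (∑ k ∈ t, g k) (∑ k ∈ t, h k) (∑ k ∈ t, l k) := by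
  ext i j
  rcases i with i | i <;> rcases j with j | j <;>
    simp [Matrix.sum_apply, fromBlocks]

end CrossTransferAux

open CrossTransferAux in
/-- If `V₁, V₂ : H_M → H_s ⊗ H_M` are isometries whose induced channels
`X ↦ tr_s(Vᵢ X Vᵢᴴ)` have full-rank positive definite fixed points `σᵢ` and no other
eigenvectors with eigenvalue of modulus 1, then every eigenvalue `ν` of
`X ↦ tr_s(V₁ X V₂ᴴ)` satisfies `|ν| ≤ 1`. -/
theorem cross_transfer_eigenvalue_abs_le_one {s m : Type*}
    [Fintype s] [Fintype m] [DecidableEq m]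
    (V₁ V₂ : Matrix (s × m) m ℂ) (σ₁ σ₂ : Matrix m m ℂ)
    (hV₁ : V₁ᴴ * V₁ = 1) (hV₂ : V₂ᴴ * V₂ = 1)
    (hσ₁ : σ₁.PosDef) (hσ₂ : σ₂.PosDef)
    (hfix₁ : ptraceS (V₁ * σ₁ * V₁ᴴ) = σ₁)
    (hfix₂ : ptraceS (V₂ * σ₂ * V₂ᴴ) = σ₂)
    (hper₁ : ∀ (X : Matrix m m ℂ) (c : ℂ), X ≠ 0 → ‖c‖ = 1 →
      ptraceS (V₁ * X * V₁ᴴ) = c • X → c = 1 ∧ ∃ z : ℂ, X = z • σ₁)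
    (hper₂ : ∀ (X : Matrix m m ℂ) (c : ℂ), X ≠ 0 → ‖c‖ = 1 →
      ptraceS (V₂ * X * V₂ᴴ) = c • X → c = 1 ∧ ∃ z : ℂ, X = z • σ₂)
    (ν : ℂ) (X : Matrix m m ℂ) (hX : X ≠ 0)
    (heig : ptraceS (V₁ * X * V₂ᴴ) = ν • X) :
    ‖ν‖ ≤ 1 := by
  classical
  by_contra hlt
  push_neg at hlt
  obtain ⟨a, b, hab⟩ : ∃ a b, X a b ≠ 0 := by
    by_contra hcon
    push_neg at hcon
    exact hX (by ext a b; simpa using hcon a b)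
  haveI : Invertible σ₁ := hσ₁.isUnit.invertible
  have hσ₁inv : σ₁⁻¹.PosDef := hσ₁.inv
  have hK : (Xᴴ * σ₁⁻¹ * X).PosSemidef := hσ₁inv.posSemidef.conjTranspose_mul_mul_same X
  obtain ⟨t, ht0, htP⟩ := exists_smul_posDef_sub hσ₂ hK
  have hZ0 : (fromBlocks σ₁ X Xᴴ ((t : ℂ) • σ₂)).PosSemidef := by
    rw [PosDef.fromBlocks₁₁ X _ hσ₁]
    exact htP
  set cν : ℂ := (starRingEnd ℂ) ν with hcν
  set Z : ℕ → Matrix (m ⊕ m) (m ⊕ m) ℂ :=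
    fun n₀ => fromBlocks σ₁ (ν ^ n₀ • X) (cν ^ n₀ • Xᴴ) ((t : ℂ) • σ₂) with hZ
  have efix₁ : ∑ k : s, slice V₁ k * σ₁ * (slice V₁ k)ᴴ = σ₁ := by
    rw [← ptraceS_eq]; exact hfix₁
  have efix₂ : ∑ k : s, slice V₂ k * σ₂ * (slice V₂ k)ᴴ = σ₂ := by
    rw [← ptraceS_eq]; exact hfix₂
  have ecross : ∑ k : s, slice V₁ k * X * (slice V₂ k)ᴴ = ν • X := by
    rw [← ptraceS_eq]; exact heig
  have ecross' : ∑ k : s, slice V₂ k * Xᴴ * (slice V₁ k)ᴴ = cν • Xᴴ := by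
    have h1 : ∑ k : s, slice V₂ k * Xᴴ * (slice V₁ k)ᴴ
        = (∑ k : s, slice V₁ k * X * (slice V₂ k)ᴴ)ᴴ := by
      rw [Matrix.conjTranspose_sum]
      refine Finset.sum_congr rfl fun k _ => ?_
      simp [Matrix.conjTranspose_mul, Matrix.mul_assoc]
    rw [h1, ecross, Matrix.conjTranspose_smul]
    rfl
  have hstep : ∀ n₀ : ℕ, Z (n₀ + 1)
      = ∑ k : s, (fromBlocks (slice V₁ k) 0 0 (slice V₂ k)) * Z n₀
          * (fromBlocks (slice V₁ k) 0 0 (slice V₂ k))ᴴ := by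
    intro n₀
    have hS₁₂ : ∑ k : s, slice V₁ k * (ν ^ n₀ • X) * (slice V₂ k)ᴴ = ν ^ (n₀ + 1) • X := by
      have : ∀ k : s, slice V₁ k * (ν ^ n₀ • X) * (slice V₂ k)ᴴ
          = ν ^ n₀ • (slice V₁ k * X * (slice V₂ k)ᴴ) := by
        intro k
        rw [Matrix.mul_smul, Matrix.smul_mul]
      rw [Finset.sum_congr rfl fun k _ => this k, ← Finset.smul_sum, ecross,
        smul_smul, ← pow_succ]
    have hS₂₁ : ∑ k : s, slice V₂ k * (cν ^ n₀ • Xᴴ) * (slice V₁ k)ᴴ = cν ^ (n₀ + 1) • Xᴴ := by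
      have : ∀ k : s, slice V₂ k * (cν ^ n₀ • Xᴴ) * (slice V₁ k)ᴴ
          = cν ^ n₀ • (slice V₂ k * Xᴴ * (slice V₁ k)ᴴ) := by
        intro k
        rw [Matrix.mul_smul, Matrix.smul_mul]
      rw [Finset.sum_congr rfl fun k _ => this k, ← Finset.smul_sum, ecross',
        smul_smul, ← pow_succ]
    have hS₂₂ : ∑ k : s, slice V₂ k * ((t : ℂ) • σ₂) * (slice V₂ k)ᴴ = (t : ℂ) • σ₂ := by
      have : ∀ k : s, slice V₂ k * ((t : ℂ) • σ₂) * (slice V₂ k)ᴴ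
          = (t : ℂ) • (slice V₂ k * σ₂ * (slice V₂ k)ᴴ) := by
        intro k
        rw [Matrix.mul_smul, Matrix.smul_mul]
      rw [Finset.sum_congr rfl fun k _ => this k, ← Finset.smul_sum, efix₂]
    simp only [hZ, fromBlocks_conjTranspose, fromBlocks_multiply]
    simp only [Matrix.zero_mul, Matrix.mul_zero, add_zero, zero_add, conjTranspose_zero]
    rw [sum_fromBlocks, efix₁, hS₁₂, hS₂₁, hS₂₂]
  have hPSD : ∀ n₀ : ℕ, (Z n₀).PosSemidef := by
    intro n₀
    induction n₀ with
    | zero => simpa [hZ] using hZ0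
    | succ k ih =>
        rw [hstep k]
        exact Finset.sum_induction _ _ (fun A B hA hB => hA.add hB) Matrix.PosSemidef.zero
          (fun q _ => ih.mul_mul_conjTranspose_same _)
  have hbound : ∀ n₀ : ℕ,
      2 * (‖ν‖ ^ n₀ * ‖X a b‖) ≤ (σ₁ a a).re + t * (σ₂ b b).re := by
    intro n₀
    have h := psd_entry_bound (hPSD n₀) (Sum.inl a) (Sum.inr b)
    have h12 : Z n₀ (Sum.inl a) (Sum.inr b) = ν ^ n₀ * X a b := by
      simp [hZ, fromBlocks]
    have h11 : Z n₀ (Sum.inl a) (Sum.inl a) = σ₁ a a := by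
      simp [hZ, fromBlocks]
    have h22 : Z n₀ (Sum.inr b) (Sum.inr b) = (t : ℂ) * σ₂ b b := by
      simp [hZ, fromBlocks]
    rw [h12, h11, h22, Complex.re_ofReal_mul, norm_mul, norm_pow] at h
    exact h
  have habX : 0 < ‖X a b‖ := norm_pos_iff.mpr hab
  obtain ⟨n₀, hn₀⟩ := pow_unbounded_of_one_lt
    (((σ₁ a a).re + t * (σ₂ b b).re) / (2 * ‖X a b‖)) hlt
  have hb := hbound n₀
  rw [div_lt_iff₀ (by positivity)] at hn₀
  nlinarith
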